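/- Let 𝐏 ⊆ 𝐏⁺ be a collection of lacunary tiles, let a : 𝐏 → [0,∞), let A > 0 and 0 < η < 1. Suppose that for every tree T that is complete with respect to 𝐏 there exists a collection 𝐓 of trees contained in T whose tops {P_{T′} : T′ ∈ 𝐓} form a (1−η)-packing of T, such that ‖a‖_{size(T \ ⋃_{T′∈𝐓} T′)} ≤ A. Then ‖a‖_{size*(𝐏)} ≤ A/η. -/

import Mathlib

open MeasureTheory Set

noncomputable section

namespace Dyadic

/-- A dyadic interval/lacunary tile: `I = [j·2^k, (j+1)·2^k)` with `-M ≤ k ≤ M`,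
`I ⊆ [0, 2^M)`.  Lacunary tiles are in bijection with dyadic intervals, so we
identify the tile `P⁺(I) = I × [1/|I|, 2/|I|)` with the data of `I`. -/
structure Tile (M : ℕ) where
  j : ℤ
  k : ℤ
  hk_lb : -(M : ℤ) ≤ k
  hk_ub : k ≤ (M : ℤ)
  hj : 0 ≤ j
  hsub : ((j : ℝ) + 1) * 2 ^ k ≤ 2 ^ (M : ℤ)

variable {M : ℕ}

/-- The side length `|I_P| = 2^k` of the spatial interval of the tile. -/
def Tile.len (P : Tile M) : ℝ := 2 ^ P.k

/-- The spatial interval `I_P` of the tile. -/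
def Tile.ival (P : Tile M) : Set ℝ :=
  Ico ((P.j : ℝ) * 2 ^ P.k) (((P.j : ℝ) + 1) * 2 ^ P.k)

/-- The order `P ≤′ Q` on lacunary tiles: `I_P ⊆ I_Q`. -/
def Tile.le (P Q : Tile M) : Prop := P.ival ⊆ Q.ival

/-- A (lacunary) tree: a collection of tiles together with a top tile. -/
structure Tree (M : ℕ) where
  tiles : Set (Tile M)
  top : Tile M
  top_mem : top ∈ tiles
  le_top : ∀ P ∈ tiles, P.le top

/-- `|I_T|`, the length of the spatial interval of the top of the tree. -/
def Tree.len (T : Tree M) : ℝ := T.top.len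

/-- A collection of tiles is convex if `P₁ ≤′ P ≤′ P₂` with `P₁, P₂` in the
collection implies `P` is in the collection. -/
def IsConvex (PP : Set (Tile M)) : Prop :=
  ∀ P₁ ∈ PP, ∀ P₂ ∈ PP, ∀ P : Tile M, P₁.le P → P.le P₂ → P ∈ PP

/-- The size `‖a‖_{size(T)} = (1/|I_T|) Σ_{P ∈ T} a(P)` of `a` on a tree `T`. -/
def treeSize (a : Tile M → ℝ) (T : Tree M) : ℝ :=
  (∑ᶠ P ∈ T.tiles, a P) / T.len

/-- The maximal size `‖a‖_{size*(PP)}`: the supremum of `‖a‖_{size(T)}` over all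
convex trees `T ⊆ PP` (by convention `0` if there are none). -/
def maxSize (a : Tile M → ℝ) (PP : Set (Tile M)) : ℝ :=
  sSup (insert 0 {s : ℝ | ∃ T : Tree M, T.tiles ⊆ PP ∧ IsConvex T.tiles ∧ s = treeSize a T})

/-- The complete tree `Tree(P) = {Q : Q ≤′ P}`. -/
def cTree (P : Tile M) : Set (Tile M) := {Q : Tile M | Q.le P}

/-- A tree `T` is complete with respect to `PP` if `T = Tree(P_T) ∩ PP`. -/
def Tree.IsCompleteIn (T : Tree M) (PP : Set (Tile M)) : Prop :=
  T.tiles = cTree T.top ∩ PP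

/-- `QQ` is an `α`-packing of the tree `T`: `QQ ⊆ T` and `Σ_{P ∈ QQ} |I_P| ≤ α|I_T|`. -/
def IsPacking (α : ℝ) (QQ : Set (Tile M)) (T : Tree M) : Prop :=
  QQ ⊆ T.tiles ∧ (∑ᶠ P ∈ QQ, Tile.len P) ≤ α * T.len

/-- `QQ` is a uniform `α`-packing of the tree `T`:
`Σ_{P ∈ QQ, I_P ⊆ J} |I_P| ≤ α|J|` for every dyadic interval `J`. -/
def IsUniformPacking (α : ℝ) (QQ : Set (Tile M)) (T : Tree M) : Prop :=
  QQ ⊆ T.tiles ∧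
    ∀ J : Tile M, (∑ᶠ P ∈ {P ∈ QQ | P.ival ⊆ J.ival}, Tile.len P) ≤ α * J.len

/-- Left half of the spatial interval. -/
def Tile.left (P : Tile M) : Set ℝ :=
  Ico ((P.j : ℝ) * 2 ^ P.k) (((P.j : ℝ) + 1 / 2) * 2 ^ P.k)

/-- Right half of the spatial interval. -/
def Tile.right (P : Tile M) : Set ℝ :=
  Ico (((P.j : ℝ) + 1 / 2) * 2 ^ P.k) (((P.j : ℝ) + 1) * 2 ^ P.k)

/-- The (mother) Haar wavelet `φ_P = |I_P|^{-1/2}(χ_{I_l} - χ_{I_r})`. -/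
def Tile.haar (P : Tile M) : ℝ → ℝ := fun x =>
  (Real.sqrt P.len)⁻¹ * (P.left.indicator 1 x - P.right.indicator 1 x)

/-- The Haar (wavelet) coefficient `Wf(P) = ⟨f, φ_P⟩`. -/
def waveCoeff (f : ℝ → ℝ) (P : Tile M) : ℝ := ∫ x, f x * P.haar x

/-- The average `[f]_{I_P} = (1/|I_P|)∫_{I_P} f`. -/
def tileAvg (f : ℝ → ℝ) (P : Tile M) : ℝ := (∫ x in P.ival, f x) / P.len

/-- The mean `‖f‖_{mean(P)} = (1/|I_P|)∫_{I_P} |f|`. -/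
def tileMean (f : ℝ → ℝ) (P : Tile M) : ℝ := (∫ x in P.ival, |f x|) / P.len

/-- The maximal mean `‖f‖_{mean*(PP)} = sup_{P ∈ PP} ‖f‖_{mean(P)}`. -/
def maxMean (f : ℝ → ℝ) (PP : Set (Tile M)) : ℝ :=
  sSup (insert 0 (tileMean f '' PP))

/-- The dyadic BMO norm `‖f‖_{BMO} = ‖|Wf|²‖_{size*(PP⁺)}^{1/2}`. -/
def bmoNorm (M : ℕ) (f : ℝ → ℝ) : ℝ :=
  Real.sqrt (maxSize (fun P : Tile M => waveCoeff f P ^ 2) univ)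

/-- The grid interval `[j·2^{-M}, (j+1)·2^{-M})` at the finest scale. -/
def gridIval (M : ℕ) (j : ℤ) : Set ℝ :=
  Ico ((j : ℝ) * 2 ^ (-(M : ℤ))) (((j : ℝ) + 1) * 2 ^ (-(M : ℤ)))

/-- A dyadic test function: supported on `[0, 2^M)` and constant on every dyadic
interval of length `2^{-M}`. -/
def IsTestFun (M : ℕ) (f : ℝ → ℝ) : Prop :=
  (∀ x : ℝ, x ∉ Ico (0 : ℝ) (2 ^ (M : ℤ)) → f x = 0) ∧
    ∀ j : ℤ, ∀ x ∈ gridIval M j, ∀ y ∈ gridIval M j, f x = f y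

/-- The `L²` norm. -/
def l2Norm (f : ℝ → ℝ) : ℝ := Real.sqrt (∫ x, f x ^ 2)

/-- The `L^∞` norm (as a supremum of values; adequate for test functions). -/
def supNorm (f : ℝ → ℝ) : ℝ := ⨆ x : ℝ, |f x|

/-- The weak `L^r` quasinorm `sup_{λ>0} λ |{|h| ≥ λ}|^{1/r}`. -/
def weakNorm (r : ℝ) (h : ℝ → ℝ) : ℝ :=
  sSup {s : ℝ | ∃ l : ℝ, 0 < l ∧ s = l * (volume {x : ℝ | l ≤ |h x|}).toReal ^ (1 / r)}

/-- The phase space projection `Π_T f = Σ_{P ∈ T} ⟨f, φ_P⟩ φ_P` onto a tree. -/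
def treeProj (T : Tree M) (f : ℝ → ℝ) : ℝ → ℝ := fun x =>
  ∑ᶠ P ∈ T.tiles, waveCoeff f P * P.haar x

/-- The high-low paraproduct `π_hl(f,g) = Σ_P Wf(P) [g]_P φ_P`. -/
def paraHL (M : ℕ) (f g : ℝ → ℝ) : ℝ → ℝ := fun x =>
  ∑ᶠ P : Tile M, waveCoeff f P * tileAvg g P * P.haar x

/-- The low-high paraproduct `π_lh(f,g) = Σ_P [f]_P Wg(P) φ_P`. -/
def paraLH (M : ℕ) (f g : ℝ → ℝ) : ℝ → ℝ := fun x =>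
  ∑ᶠ P : Tile M, tileAvg f P * waveCoeff g P * P.haar x

/-- The high-high paraproduct `π_hh(f,g) = Σ_P Wf(P) Wg(P) χ_{I_P}/|I_P|`. -/
def paraHH (M : ℕ) (f g : ℝ → ℝ) : ℝ → ℝ := fun x =>
  ∑ᶠ P : Tile M, waveCoeff f P * waveCoeff g P * P.ival.indicator 1 x / P.len

/-- The constant function `1` on `[0, 2^M)`. -/
def oneFn (M : ℕ) : ℝ → ℝ := (Ico (0 : ℝ) (2 ^ (M : ℤ))).indicator 1

/-- A perfect dyadic Calderón–Zygmund operator, recorded via its kernel `K` and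
kernel constant `A₀`. -/
structure PDCZ (M : ℕ) where
  K : ℝ → ℝ → ℝ
  A₀ : ℝ
  hA₀ : 0 < A₀
  meas : Measurable (Function.uncurry K)
  bound : ∀ x y : ℝ, x ≠ y → |K x y| ≤ A₀ / |x - y|
  perfectX : ∀ I J : Tile M, Disjoint I.ival J.ival →
    ∀ x ∈ I.ival, ∀ x' ∈ I.ival, ∀ y ∈ J.ival, K x y = K x' y
  perfectY : ∀ I J : Tile M, Disjoint I.ival J.ival →
    ∀ x ∈ I.ival, ∀ x' ∈ I.ival, ∀ y ∈ J.ival, K y x = K y x'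
  diag : ∀ I : Tile M, I.k = -(M : ℤ) → ∀ x ∈ I.ival, ∀ y ∈ I.ival, K x y = 0
  corner₁ : ∀ x ∈ Ico (0 : ℝ) (2 ^ ((M : ℤ) - 1)),
    ∀ y ∈ Ico ((2 : ℝ) ^ ((M : ℤ) - 1)) (2 ^ (M : ℤ)), K x y = 0
  corner₂ : ∀ x ∈ Ico ((2 : ℝ) ^ ((M : ℤ) - 1)) (2 ^ (M : ℤ)),
    ∀ y ∈ Ico (0 : ℝ) (2 ^ ((M : ℤ) - 1)), K x y = 0

/-- `Tf(x) = ∫ K(x,y) f(y) dy`. -/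
def PDCZ.app (Op : PDCZ M) (f : ℝ → ℝ) : ℝ → ℝ := fun x => ∫ y, Op.K x y * f y

/-- The transpose `T*f(x) = ∫ K(y,x) f(y) dy`. -/
def PDCZ.appT (Op : PDCZ M) (f : ℝ → ℝ) : ℝ → ℝ := fun x => ∫ y, Op.K y x * f y

/-- Complex-valued Haar coefficient. -/
def waveCoeffC (b : ℝ → ℂ) (P : Tile M) : ℂ := ∫ x, b x * (P.haar x : ℂ)

/-- Complex-valued average. -/
def tileAvgC (b : ℝ → ℂ) (P : Tile M) : ℂ := (∫ x in P.ival, b x) / (P.len : ℂ)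

/-- BMO norm of a complex-valued function. -/
def bmoNormC (M : ℕ) (b : ℝ → ℂ) : ℝ :=
  Real.sqrt (maxSize (fun P : Tile M => ‖waveCoeffC b P‖ ^ 2) univ)

/-- Complex-valued dyadic test functions. -/
def IsTestFunC (M : ℕ) (b : ℝ → ℂ) : Prop :=
  (∀ x : ℝ, x ∉ Ico (0 : ℝ) (2 ^ (M : ℤ)) → b x = 0) ∧
    ∀ j : ℤ, ∀ x ∈ gridIval M j, ∀ y ∈ gridIval M j, b x = b y

/-- The operator applied to a complex-valued function. -/
def PDCZ.appC (Op : PDCZ M) (b : ℝ → ℂ) : ℝ → ℂ := fun x => ∫ y, (Op.K x y : ℂ) * b y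



/-! ### Auxiliary lemmas for statement1 -/

lemma Tile.len_pos (P : Tile M) : 0 < P.len := by
  have : (0:ℝ) < 2 := by norm_num
  exact zpow_pos this _

lemma Tile.ext'' {P Q : Tile M} (hj : P.j = Q.j) (hk : P.k = Q.k) : P = Q := by
  cases P; cases Q; simp_all

lemma Tile.le_refl' (P : Tile M) : P.le P := subset_rfl

lemma Tile.le_trans' {P Q R : Tile M} (h1 : P.le Q) (h2 : Q.le R) : P.le R :=
  Set.Subset.trans h1 h2

lemma Tile.ival_lt (P : Tile M) : (P.j : ℝ) * 2 ^ P.k < ((P.j : ℝ) + 1) * 2 ^ P.k := by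
  have h2 : (0:ℝ) < 2 ^ P.k := zpow_pos (by norm_num) _
  nlinarith

lemma Tile.le_antisymm' {P Q : Tile M} (h1 : P.le Q) (h2 : Q.le P) : P = Q := by
  have hiv : P.ival = Q.ival := Set.Subset.antisymm h1 h2
  unfold Tile.ival at hiv
  have := (Set.Ico_eq_Ico_iff (Or.inl P.ival_lt)).mp hiv
  obtain ⟨ha, hb⟩ := this
  have hk : (2:ℝ) ^ P.k = 2 ^ Q.k := by nlinarith
  have hk' : P.k = Q.k := zpow_right_injective₀ (by norm_num : (0:ℝ) < 2) (by norm_num) hk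
  have hj : (P.j : ℝ) = Q.j := by
    have h2 : (0:ℝ) < 2 ^ P.k := zpow_pos (by norm_num) _
    rw [← hk'] at ha
    exact mul_right_cancel₀ (ne_of_gt h2) ha
  exact Tile.ext'' (by exact_mod_cast hj) hk'

lemma Tile.j_le (P : Tile M) : P.j ≤ 2 ^ (2 * M) := by
  have hk : (2:ℝ) ^ (-(M:ℤ)) ≤ 2 ^ P.k := zpow_le_zpow_right₀ (by norm_num) P.hk_lb
  have hj0 : (0:ℝ) ≤ (P.j : ℝ) := by exact_mod_cast P.hj
  have hj1 : (0:ℝ) ≤ (P.j : ℝ) + 1 := by linarith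
  have h1 : ((P.j : ℝ) + 1) * 2 ^ (-(M:ℤ)) ≤ 2 ^ (M:ℤ) :=
    le_trans (by nlinarith) P.hsub
  have h2 : ((P.j : ℝ) + 1) ≤ 2 ^ (M:ℤ) * 2 ^ (M:ℤ) := by
    have hMpos : (0:ℝ) < 2 ^ (M:ℤ) := zpow_pos (by norm_num) _
    have hinv : (2:ℝ) ^ (-(M:ℤ)) * 2 ^ (M:ℤ) = 1 := by
      rw [← zpow_add₀ (by norm_num : (2:ℝ) ≠ 0)]; simp
    have hmul := mul_le_mul_of_nonneg_right h1 (le_of_lt hMpos)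
    calc ((P.j : ℝ) + 1) = ((P.j : ℝ) + 1) * (2 ^ (-(M:ℤ)) * 2 ^ (M:ℤ)) := by rw [hinv]; ring
      _ = ((P.j : ℝ) + 1) * 2 ^ (-(M:ℤ)) * 2 ^ (M:ℤ) := by ring
      _ ≤ 2 ^ (M:ℤ) * 2 ^ (M:ℤ) := hmul
  have h3 : ((P.j : ℝ) + 1) ≤ ((2 ^ (2 * M) : ℤ) : ℝ) := by
    calc ((P.j : ℝ) + 1) ≤ 2 ^ (M:ℤ) * 2 ^ (M:ℤ) := h2
      _ = ((2 ^ (2 * M) : ℤ) : ℝ) := by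
          push_cast
          rw [← zpow_natCast (2:ℝ) (2*M), ← zpow_add₀ (by norm_num : (2:ℝ) ≠ 0)]
          congr 1
          push_cast; ring
  have : P.j + 1 ≤ 2 ^ (2 * M) := by exact_mod_cast h3
  omega

instance : Finite (Tile M) := by
  have h1 : (Set.Icc (0:ℤ) (2 ^ (2 * M))).Finite := Set.finite_Icc _ _
  have h2 : (Set.Icc (-(M:ℤ)) (M:ℤ)).Finite := Set.finite_Icc _ _
  haveI := h1.to_subtype
  haveI := h2.to_subtype
  apply Finite.of_injective (fun P : Tile M =>
    ((⟨P.j, P.hj, P.j_le⟩ : Set.Icc (0:ℤ) (2 ^ (2 * M))),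
     (⟨P.k, P.hk_lb, P.hk_ub⟩ : Set.Icc (-(M:ℤ)) (M:ℤ))))
  intro P Q h
  simp only [Prod.mk.injEq, Subtype.mk.injEq] at h
  exact Tile.ext'' (congrArg Subtype.val h.1) (congrArg Subtype.val h.2)

instance : Finite (Tree M) := by
  apply Finite.of_injective (fun T : Tree M => (T.tiles, T.top))
  intro T T' h
  simp only [Prod.mk.injEq] at h
  cases T; cases T'; simp_all

lemma sum_biUnion_le_nonneg {ι α : Type*} [DecidableEq α] (tt : Finset ι) (g : ι → Finset α)
    (f : α → ℝ) (hf : ∀ T ∈ tt, ∀ x ∈ g T, 0 ≤ f x) :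
    ∑ x ∈ tt.biUnion g, f x ≤ ∑ T ∈ tt, ∑ x ∈ g T, f x := by
  classical
  induction tt using Finset.induction_on with
  | empty => simp
  | @insert a s ha ih =>
    rw [Finset.biUnion_insert, Finset.sum_insert ha]
    have key := Finset.sum_union_inter (s₁ := g a) (s₂ := s.biUnion g) (f := f)
    have hnn : 0 ≤ ∑ x ∈ g a ∩ s.biUnion g, f x :=
      Finset.sum_nonneg fun x hx =>
        hf a (Finset.mem_insert_self a s) x (Finset.mem_inter.mp hx).1
    have ih' := ih fun T hT x hx => hf T (Finset.mem_insert_of_mem hT) x hx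
    linarith

/-- Lemma 2.3, "tree-samp". -/
theorem statement1 (M : ℕ) (PP : Set (Tile M)) (a : Tile M → ℝ) (A η : ℝ)
    (ha : ∀ P ∈ PP, 0 ≤ a P) (hA : 0 < A) (hη0 : 0 < η) (hη1 : η < 1)
    (h : ∀ T : Tree M, T.IsCompleteIn PP →
      ∃ TT : Set (Tree M),
        (∀ T' ∈ TT, T'.tiles ⊆ T.tiles) ∧
        (∀ T' ∈ TT, T'.top ∈ T.tiles) ∧
        (∑ᶠ T' ∈ TT, Tile.len T'.top) ≤ (1 - η) * T.len ∧
        (∑ᶠ P ∈ (T.tiles \ ⋃ T' ∈ TT, T'.tiles), a P) ≤ A * T.len) :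
    maxSize a PP ≤ A / η := by
  classical
  have hηne : η ≠ 0 := ne_of_gt hη0
  have hAη : 0 ≤ A / η := le_of_lt (div_pos hA hη0)
  -- Key inductive claim
  have key : ∀ n : ℕ, ∀ P₀ : Tile M, P₀ ∈ PP → (cTree P₀ ∩ PP).ncard ≤ n →
      (∑ᶠ P ∈ (cTree P₀ ∩ PP), a P) ≤ (A / η) * P₀.len := by
    intro n
    induction n with
    | zero =>
      intro P₀ hP₀ hcard
      have hmem : P₀ ∈ cTree P₀ ∩ PP := ⟨P₀.le_refl', hP₀⟩
      have := (Set.ncard_pos (Set.toFinite _)).mpr ⟨P₀, hmem⟩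
      omega
    | succ n ih =>
      intro P₀ hP₀ hcard
      set Tc : Tree M := ⟨cTree P₀ ∩ PP, P₀, ⟨P₀.le_refl', hP₀⟩, fun _ hP => hP.1⟩ with hTc
      have hcomp : Tc.IsCompleteIn PP := rfl
      obtain ⟨TT, hsub, htops, hpack, hdiff⟩ := h Tc hcomp
      have hTlen : Tc.len = P₀.len := rfl
      set tt := (Set.toFinite TT).toFinset with htt
      set t := (Set.toFinite Tc.tiles).toFinset with ht
      set u := tt.biUnion (fun T' => (Set.toFinite T'.tiles).toFinset) with hu
      -- rewrite packing hypothesis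
      have hpack' : ∑ T' ∈ tt, Tile.len T'.top ≤ (1 - η) * P₀.len := by
        rw [← hTlen, ← finsum_mem_coe_finset]
        convert hpack using 2
        simp [htt]
      -- every top is strictly below P₀
      have hne : ∀ T' ∈ TT, T'.top ≠ P₀ := by
        intro T' hT' he
        have hmem : T' ∈ tt := by simp [htt, hT']
        have hle : Tile.len T'.top ≤ ∑ T'' ∈ tt, Tile.len T''.top :=
          Finset.single_le_sum (fun T'' _ => le_of_lt T''.top.len_pos) hmem
        have hlenP : Tile.len T'.top = P₀.len := by rw [he]
        have hp := P₀.len_pos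
        rw [hlenP] at hle
        nlinarith [hpack', hp]
      -- inductive bound for each subtree
      have step2 : ∀ T' ∈ TT, ∑ x ∈ (Set.toFinite T'.tiles).toFinset, a x
          ≤ (A / η) * T'.top.len := by
        intro T' hT'
        have h_top_mem : T'.top ∈ Tc.tiles := htops T' hT'
        have h_top_le : T'.top.le P₀ := h_top_mem.1
        have h_top_PP : T'.top ∈ PP := h_top_mem.2
        set S' := cTree T'.top ∩ PP with hS'
        have hS'sub : S' ⊆ Tc.tiles := by
          rintro Q ⟨hQ1, hQ2⟩
          exact ⟨Tile.le_trans' hQ1 h_top_le, hQ2⟩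
        have hproper : P₀ ∉ S' := by
          rintro ⟨hp1, _⟩
          exact hne T' hT' (Tile.le_antisymm' h_top_le hp1)
        have hss : S' ⊂ Tc.tiles :=
          ⟨hS'sub, fun hback => hproper (hback ⟨P₀.le_refl', hP₀⟩)⟩
        have hlt : S'.ncard < Tc.tiles.ncard := Set.ncard_lt_ncard hss (Set.toFinite _)
        have hcard' : S'.ncard ≤ n := by
          have : Tc.tiles.ncard ≤ n + 1 := hcard
          omega
        have hihbound := ih T'.top h_top_PP hcard'
        rw [finsum_mem_eq_finite_toFinset_sum _ (Set.toFinite S')] at hihbound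
        refine le_trans ?_ hihbound
        apply Finset.sum_le_sum_of_subset_of_nonneg
        · intro x hx
          simp only [Set.Finite.mem_toFinset] at hx ⊢
          have hxT : x ∈ Tc.tiles := hsub T' hT' hx
          exact ⟨T'.le_top x hx, hxT.2⟩
        · intro x hx _
          simp only [Set.Finite.mem_toFinset] at hx
          exact ha x hx.2
      -- assemble
      have hut : u ⊆ t := by
        intro x hx
        simp only [hu, Finset.mem_biUnion, Set.Finite.mem_toFinset] at hx
        obtain ⟨T', hT', hxT'⟩ := hx
        simp only [htt, ht, Set.Finite.mem_toFinset] at hT' ⊢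
        exact hsub T' hT' hxT'
      have hdiff' : ∑ x ∈ t \ u, a x ≤ A * P₀.len := by
        rw [← hTlen, ← finsum_mem_coe_finset]
        convert hdiff using 2
        ext x
        simp [ht, hu, htt, Set.Finite.mem_toFinset]
      have hsum_u : ∑ x ∈ u, a x ≤ (A / η) * ((1 - η) * P₀.len) := by
        calc ∑ x ∈ u, a x ≤ ∑ T' ∈ tt, ∑ x ∈ (Set.toFinite T'.tiles).toFinset, a x := by
              apply sum_biUnion_le_nonneg
              intro T' hT' x hx
              simp only [htt, Set.Finite.mem_toFinset] at hT' hx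
              exact ha x ((hsub T' hT' hx).2)
          _ ≤ ∑ T' ∈ tt, (A / η) * T'.top.len := by
              apply Finset.sum_le_sum
              intro T' hT'
              simp only [htt, Set.Finite.mem_toFinset] at hT'
              exact step2 T' hT'
          _ = (A / η) * ∑ T' ∈ tt, Tile.len T'.top := by rw [Finset.mul_sum]
          _ ≤ (A / η) * ((1 - η) * P₀.len) := by
              apply mul_le_mul_of_nonneg_left _ hAη
              exact hpack'
      have htotal : ∑ x ∈ t, a x = ∑ x ∈ t \ u, a x + ∑ x ∈ u, a x :=
        (Finset.sum_sdiff hut).symm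
      have hfinal : ∑ x ∈ t, a x ≤ (A / η) * P₀.len := by
        have hp := P₀.len_pos
        have harith : A * P₀.len + (A / η) * ((1 - η) * P₀.len) = (A / η) * P₀.len := by
          field_simp
          ring
        linarith
      rw [finsum_mem_eq_finite_toFinset_sum _ (Set.toFinite (cTree P₀ ∩ PP))]
      exact hfinal
  -- Conclude for arbitrary convex trees
  apply Real.sSup_le _ hAη
  rintro x hx
  rcases hx with rfl | ⟨T, hTsub, _, rfl⟩
  · exact hAη
  · have hP₀ : T.top ∈ PP := hTsub T.top_mem
    have hb := key (cTree T.top ∩ PP).ncard T.top hP₀ le_rfl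
    have hsub' : T.tiles ⊆ cTree T.top ∩ PP := fun P hP => ⟨T.le_top P hP, hTsub hP⟩
    have hmono : (∑ᶠ P ∈ T.tiles, a P) ≤ ∑ᶠ P ∈ (cTree T.top ∩ PP), a P := by
      rw [finsum_mem_eq_finite_toFinset_sum _ (Set.toFinite T.tiles),
        finsum_mem_eq_finite_toFinset_sum _ (Set.toFinite (cTree T.top ∩ PP))]
      apply Finset.sum_le_sum_of_subset_of_nonneg
      · intro x hx
        simp only [Set.Finite.mem_toFinset] at hx ⊢
        exact hsub' hx
      · intro x hx _
        simp only [Set.Finite.mem_toFinset] at hx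
        exact ha x hx.2
    have hlen : (0:ℝ) < T.len := T.top.len_pos
    rw [treeSize, div_le_iff₀ hlen]
    calc ∑ᶠ P ∈ T.tiles, a P ≤ ∑ᶠ P ∈ (cTree T.top ∩ PP), a P := hmono
      _ ≤ (A / η) * T.top.len := hb
      _ = A / η * T.len := rfl

end Dyadic
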